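/- arXiv:2211.02583 — 2 statements merged into one kernel-verified Lean document; each statement's English description precedes it below -/
import Mathlib

section
/- For constants Λ₀ > 0, γ > 0, and α ∈ (0,1), the Laplace transform of λ(t) = Λ₀/(1-α) - (αΛ₀/(1-α)) e^{(1-α)²γ²t} erfc((1-α)γ√t) is λ̃(s) = (Λ₀/s)·(γ + √s)/((1-α)γ + √s) for s > (1-α)²γ². -/
open MeasureTheory Real Set Filter Topology

noncomputable def erfc (x : ℝ) : ℝ := 1 - (2 / Real.sqrt Real.pi) * ∫ τ in (0:ℝ)..x, Real.exp (-τ^2)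

lemma erfc_zero' : erfc 0 = 1 := by simp [erfc]

lemma hasDerivAt_erfc (x : ℝ) :
    HasDerivAt erfc (-((2 / Real.sqrt Real.pi) * Real.exp (-x^2))) x := by
  have hc : Continuous fun τ : ℝ => Real.exp (-τ^2) := by continuity
  have h : HasDerivAt (fun u => ∫ τ in (0:ℝ)..u, Real.exp (-τ^2)) (Real.exp (-x^2)) x :=
    intervalIntegral.integral_hasDerivAt_right (hc.intervalIntegrable 0 x)
      (hc.stronglyMeasurableAtFilter _ _) hc.continuousAt
  exact (h.const_mul (2 / Real.sqrt Real.pi)).const_sub 1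

lemma continuous_erfc : Continuous erfc :=
  continuous_iff_continuousAt.2 fun x => (hasDerivAt_erfc x).continuousAt

lemma erfc_le_one {x : ℝ} (hx : 0 ≤ x) : erfc x ≤ 1 := by
  have h1 : 0 ≤ ∫ τ in (0:ℝ)..x, Real.exp (-τ^2) :=
    intervalIntegral.integral_nonneg hx (fun u _ => (Real.exp_pos _).le)
  have h2 : 0 ≤ 2 / Real.sqrt Real.pi := by positivity
  have := mul_nonneg h2 h1
  simp only [erfc]; linarith

lemma erfc_nonneg {x : ℝ} (hx : 0 ≤ x) : 0 ≤ erfc x := by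
  have hint : IntegrableOn (fun τ : ℝ => Real.exp (-τ^2)) (Ioi 0) := by
    have := (integrable_exp_neg_mul_sq (one_pos)).integrableOn (s := Ioi (0:ℝ))
    simpa using this
  have h1 : (∫ τ in (0:ℝ)..x, Real.exp (-τ^2)) ≤ ∫ τ in Ioi (0:ℝ), Real.exp (-τ^2) := by
    rw [intervalIntegral.integral_of_le hx]
    exact setIntegral_mono_set hint (Eventually.of_forall fun τ => (Real.exp_pos _).le)
      (Eventually.of_forall Ioc_subset_Ioi_self)
  have h2 : (∫ τ in Ioi (0:ℝ), Real.exp (-τ^2)) = Real.sqrt Real.pi / 2 := by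
    have := integral_gaussian_Ioi 1
    simpa using this
  have hπ : 0 < Real.sqrt Real.pi := Real.sqrt_pos.2 Real.pi_pos
  have : (2 / Real.sqrt Real.pi) * ∫ τ in (0:ℝ)..x, Real.exp (-τ^2) ≤ 1 := by
    rw [div_mul_eq_mul_div, div_le_one hπ]
    calc 2 * ∫ τ in (0:ℝ)..x, Real.exp (-τ^2) ≤ 2 * (Real.sqrt Real.pi / 2) := by linarith
    _ = Real.sqrt Real.pi := by ring
  simp only [erfc]; linarith

lemma sqrt_inv_laplace (s : ℝ) (hs : 0 < s) :
    IntegrableOn (fun t : ℝ => Real.exp (-(s*t)) * (Real.sqrt t)⁻¹) (Set.Ioi 0) ∧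
    (∫ t in Set.Ioi (0:ℝ), Real.exp (-(s*t)) * (Real.sqrt t)⁻¹) = Real.sqrt Real.pi / Real.sqrt s := by
  have hG : IntegrableOn (fun x : ℝ => Real.exp (-x) * x ^ ((1:ℝ)/2 - 1)) (Ioi 0) :=
    Real.GammaIntegral_convergent (by norm_num)
  have hss : (0:ℝ) < Real.sqrt s := Real.sqrt_pos.2 hs
  have key : ∀ t ∈ Ioi (0:ℝ),
      Real.exp (-(s*t)) * (s*t) ^ ((1:ℝ)/2 - 1) = (Real.sqrt s)⁻¹ * (Real.exp (-(s*t)) * (Real.sqrt t)⁻¹) := by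
    intro t ht
    have hst : (0:ℝ) < s * t := mul_pos hs ht
    have : (s*t) ^ ((1:ℝ)/2 - 1) = (Real.sqrt (s*t))⁻¹ := by
      rw [show ((1:ℝ)/2 - 1) = -(1/2) by norm_num, Real.rpow_neg hst.le, ← Real.sqrt_eq_rpow]
    rw [this, Real.sqrt_mul hs.le, mul_inv]
    ring
  have h1 : IntegrableOn (fun t : ℝ => Real.exp (-(s*t)) * (s*t) ^ ((1:ℝ)/2 - 1)) (Ioi 0) := by
    have := (integrableOn_Ioi_comp_mul_left_iff
      (fun x : ℝ => Real.exp (-x) * x ^ ((1:ℝ)/2 - 1)) 0 hs).2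
    simpa using this (by simpa using hG)
  have h2 : IntegrableOn
      (fun t : ℝ => Real.sqrt s * ((Real.sqrt s)⁻¹ * (Real.exp (-(s*t)) * (Real.sqrt t)⁻¹))) (Ioi 0) :=
    (h1.congr_fun key measurableSet_Ioi).const_mul _
  constructor
  · refine h2.congr_fun (fun t ht => ?_) measurableSet_Ioi
    dsimp only
    rw [← mul_assoc, mul_inv_cancel₀ hss.ne', one_mul]
  · have hv1 : (∫ t in Ioi (0:ℝ), Real.exp (-(s*t)) * (s*t) ^ ((1:ℝ)/2 - 1))
        = s⁻¹ * Real.Gamma (1/2) := by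
      have := integral_comp_mul_left_Ioi (fun x : ℝ => Real.exp (-x) * x ^ ((1:ℝ)/2 - 1)) 0 hs
      rw [Real.Gamma_eq_integral (by norm_num : (0:ℝ) < 1/2)]
      simpa using this
    have hv2 : (∫ t in Ioi (0:ℝ), Real.exp (-(s*t)) * (s*t) ^ ((1:ℝ)/2 - 1))
        = (Real.sqrt s)⁻¹ * ∫ t in Ioi (0:ℝ), Real.exp (-(s*t)) * (Real.sqrt t)⁻¹ := by
      rw [← integral_const_mul]
      exact setIntegral_congr_fun measurableSet_Ioi key
    rw [hv1, Real.Gamma_one_half_eq] at hv2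
    have h3 : Real.sqrt s * Real.sqrt s = s := Real.mul_self_sqrt hs.le
    have h4 : (∫ t in Ioi (0:ℝ), Real.exp (-(s*t)) * (Real.sqrt t)⁻¹)
        = Real.sqrt s * (s⁻¹ * Real.sqrt Real.pi) := by
      rw [hv2, ← mul_assoc, mul_inv_cancel₀ hss.ne', one_mul]
    rw [h4, ← h3]
    field_simp
    rw [Real.sqrt_sq hss.le, Real.sq_sqrt hs.le]

lemma laplace_erfc {a s : ℝ} (ha : 0 < a) (has : a^2 < s) :
    IntegrableOn (fun t : ℝ => Real.exp (-((s - a^2) * t)) * erfc (a * Real.sqrt t)) (Set.Ioi 0) ∧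
    (∫ t in Set.Ioi (0:ℝ), Real.exp (-((s - a^2) * t)) * erfc (a * Real.sqrt t))
      = 1/(s - a^2) - a/((s - a^2) * Real.sqrt s) := by
  have hb : (0:ℝ) < s - a^2 := by linarith
  have hs0 : (0:ℝ) < s := lt_trans (by positivity) has
  have hπ : (0:ℝ) < Real.sqrt Real.pi := Real.sqrt_pos.2 Real.pi_pos
  set b : ℝ := s - a^2 with hbdef
  -- integrability of g₁
  have hg1 : IntegrableOn (fun t : ℝ => Real.exp (-(b * t)) * erfc (a * Real.sqrt t)) (Ioi 0) := by
    have hmono : IntegrableOn (fun t : ℝ => Real.exp (-b * t)) (Ioi 0) :=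
      exp_neg_integrableOn_Ioi 0 hb
    refine Integrable.mono hmono ?_ ?_
    · exact ((Real.continuous_exp.comp ((continuous_const.mul continuous_id).neg)).mul
        (continuous_erfc.comp (continuous_const.mul Real.continuous_sqrt))).aestronglyMeasurable
    · rw [ae_restrict_iff' measurableSet_Ioi]
      refine Eventually.of_forall fun t ht => ?_
      have ht0 : (0:ℝ) < t := ht
      have hx : (0:ℝ) ≤ a * Real.sqrt t := by positivity
      have h1 := erfc_nonneg hx
      have h2 := erfc_le_one hx
      have hexp : (0:ℝ) < Real.exp (-(b*t)) := Real.exp_pos _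
      rw [Real.norm_eq_abs, Real.norm_eq_abs, abs_of_nonneg (mul_nonneg hexp.le h1),
        abs_of_pos (Real.exp_pos _), neg_mul]
      nlinarith
  -- the primitive F and its derivative
  set F : ℝ → ℝ := fun t => -(Real.exp (-(b * t)) / b * erfc (a * Real.sqrt t)) with hF
  have hderiv : ∀ t ∈ Ioi (0:ℝ), HasDerivAt F
      (Real.exp (-(b * t)) * erfc (a * Real.sqrt t)
        + (a/(b * Real.sqrt Real.pi)) * (Real.exp (-(s*t)) * (Real.sqrt t)⁻¹)) t := by
    intro t ht
    have ht0 : (0:ℝ) < t := ht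
    have hst : (0:ℝ) < Real.sqrt t := Real.sqrt_pos.2 ht0
    have hsq : HasDerivAt (fun u : ℝ => a * Real.sqrt u) (a * (1 / (2 * Real.sqrt t))) t :=
      (Real.hasDerivAt_sqrt ht0.ne').const_mul a
    have herfc : HasDerivAt (fun u : ℝ => erfc (a * Real.sqrt u))
        (-((2 / Real.sqrt Real.pi) * Real.exp (-(a * Real.sqrt t)^2)) * (a * (1 / (2 * Real.sqrt t)))) t :=
      by have := (hasDerivAt_erfc (a * Real.sqrt t)).comp t hsq; exact this
    have hlin : HasDerivAt (fun u : ℝ => -(b * u)) (-b) t := by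
      have := ((hasDerivAt_id t).const_mul b).neg; rw [mul_one] at this; exact this
    have hexp : HasDerivAt (fun u : ℝ => Real.exp (-(b * u))) (Real.exp (-(b*t)) * (-b)) t :=
      hlin.exp
    have hprod := (((hexp.div_const b).mul herfc).neg)
    refine hprod.congr_deriv ?_
    have hsqv : (a * Real.sqrt t)^2 = a^2 * t := by
      rw [mul_pow, Real.sq_sqrt ht0.le]
    have hE : Real.exp (-(b*t)) * Real.exp (-(a^2*t)) = Real.exp (-(s*t)) := by
      rw [← Real.exp_add]; congr 1; rw [hbdef]; ring
    rw [hsqv, ← hE]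
    field_simp
    ring
  -- F' integrable
  have hg2 := sqrt_inv_laplace s hs0
  have hFint : IntegrableOn (fun t : ℝ => Real.exp (-(b * t)) * erfc (a * Real.sqrt t)
      + (a/(b * Real.sqrt Real.pi)) * (Real.exp (-(s*t)) * (Real.sqrt t)⁻¹)) (Ioi 0) :=
    hg1.add (hg2.1.const_mul _)
  -- F tends to 0
  have htend : Tendsto F atTop (𝓝 0) := by
    apply squeeze_zero_norm' (a := fun t => Real.exp (-(b * t)) / b)
    · filter_upwards [Filter.eventually_ge_atTop (0:ℝ)] with t ht
      have hx : (0:ℝ) ≤ a * Real.sqrt t := by positivity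
      have h1 := erfc_nonneg hx
      have h2 := erfc_le_one hx
      have hexp : (0:ℝ) < Real.exp (-(b*t)) := Real.exp_pos _
      have hnn : 0 ≤ Real.exp (-(b*t)) / b * erfc (a * Real.sqrt t) := by positivity
      have hFt : ‖F t‖ = Real.exp (-(b*t)) / b * erfc (a * Real.sqrt t) := by
        simp only [hF, Real.norm_eq_abs, abs_neg]
        exact abs_of_nonneg hnn
      rw [hFt]
      have hdiv : 0 < Real.exp (-(b*t)) / b := by positivity
      exact mul_le_of_le_one_right hdiv.le h2
    · have h1 : Tendsto (fun t : ℝ => Real.exp (-(b * t))) atTop (𝓝 0) := by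
        exact Real.tendsto_exp_neg_atTop_nhds_zero.comp (Tendsto.const_mul_atTop hb tendsto_id)
      simpa using h1.div_const b
  -- continuity at 0
  have hcont : ContinuousWithinAt F (Ici 0) 0 := by
    apply Continuous.continuousWithinAt
    rw [hF]
    have c1 : Continuous fun t : ℝ => Real.exp (-(b*t)) / b := by continuity
    have c2 : Continuous fun t : ℝ => erfc (a * Real.sqrt t) :=
      continuous_erfc.comp (by continuity)
    exact (c1.mul c2).neg
  have FTC := integral_Ioi_of_hasDerivAt_of_tendsto hcont hderiv hFint htend
  have hF0 : F 0 = -(1/b) := by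
    simp [hF, erfc_zero']
  rw [hF0] at FTC
  have hsplit : (∫ t in Ioi (0:ℝ), (Real.exp (-(b * t)) * erfc (a * Real.sqrt t)
      + (a/(b * Real.sqrt Real.pi)) * (Real.exp (-(s*t)) * (Real.sqrt t)⁻¹)))
      = (∫ t in Ioi (0:ℝ), Real.exp (-(b * t)) * erfc (a * Real.sqrt t))
        + (a/(b * Real.sqrt Real.pi)) * (Real.sqrt Real.pi / Real.sqrt s) := by
    rw [integral_add hg1 (hg2.1.const_mul _), integral_const_mul, hg2.2]
  rw [hsplit] at FTC
  have hval : (∫ t in Ioi (0:ℝ), Real.exp (-(b * t)) * erfc (a * Real.sqrt t))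
      = 1/b - a/(b * Real.sqrt s) := by
    have hss : (0:ℝ) < Real.sqrt s := Real.sqrt_pos.2 hs0
    have : (a/(b * Real.sqrt Real.pi)) * (Real.sqrt Real.pi / Real.sqrt s) = a/(b * Real.sqrt s) := by
      field_simp
    rw [this] at FTC
    linarith
  exact ⟨hg1, hval⟩

theorem laplace_expected_intensity_half (Λ₀ γ α : ℝ) (hΛ : 0 < Λ₀) (hγ : 0 < γ)
    (hα : α ∈ Set.Ioo (0:ℝ) 1) (s : ℝ) (hs : (1-α)^2 * γ^2 < s) :
    ∫ t in Set.Ioi (0:ℝ), Real.exp (-s * t) *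
        (Λ₀ / (1-α) - (α * Λ₀ / (1-α)) * Real.exp ((1-α)^2 * γ^2 * t) *
          erfc ((1-α) * γ * Real.sqrt t))
      = (Λ₀ / s) * (γ + Real.sqrt s) / ((1-α) * γ + Real.sqrt s) := by
  obtain ⟨hα0, hα1⟩ := hα
  have h1α : (0:ℝ) < 1 - α := by linarith
  set a : ℝ := (1-α) * γ with hadef
  have ha : 0 < a := mul_pos h1α hγ
  have ha2 : a^2 = (1-α)^2 * γ^2 := by rw [hadef]; ring
  have has : a^2 < s := by rw [ha2]; exact hs
  have hs0 : (0:ℝ) < s := lt_trans (by positivity) has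
  have hL := laplace_erfc ha has
  have hsplit : (fun t : ℝ => Real.exp (-s * t) *
        (Λ₀ / (1-α) - (α * Λ₀ / (1-α)) * Real.exp ((1-α)^2 * γ^2 * t) * erfc (a * Real.sqrt t)))
      = fun t : ℝ => (Λ₀ / (1-α)) * Real.exp (-s * t)
        - (α * Λ₀ / (1-α)) * (Real.exp (-((s - a^2) * t)) * erfc (a * Real.sqrt t)) := by
    funext t
    have he : Real.exp (-s * t) * Real.exp ((1-α)^2 * γ^2 * t) = Real.exp (-((s - a^2) * t)) := by
      rw [← Real.exp_add]; congr 1; rw [ha2]; ring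
    rw [← he]; ring
  rw [hsplit]
  have h_int1 : IntegrableOn (fun t : ℝ => (Λ₀ / (1-α)) * Real.exp (-s * t)) (Set.Ioi 0) :=
    (exp_neg_integrableOn_Ioi 0 hs0).const_mul _
  have h_int2 : IntegrableOn (fun t : ℝ =>
      (α * Λ₀ / (1-α)) * (Real.exp (-((s - a^2) * t)) * erfc (a * Real.sqrt t))) (Set.Ioi 0) :=
    hL.1.const_mul _
  rw [integral_sub h_int1 h_int2, integral_const_mul, integral_const_mul, hL.2]
  have hexpint : (∫ t in Set.Ioi (0:ℝ), Real.exp (-s * t)) = s⁻¹ := by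
    have := integral_comp_mul_left_Ioi (fun x : ℝ => Real.exp (-x)) 0 hs0
    simpa [neg_mul, integral_exp_neg_Ioi, integral_exp_Iic_zero] using this
  rw [hexpint]
  -- final algebra
  set u : ℝ := Real.sqrt s with hudef
  have hu0 : 0 < u := Real.sqrt_pos.2 hs0
  have hau : a < u := by
    rw [hudef]; exact (Real.lt_sqrt ha.le).2 has
  have h3 : u * u = s := Real.mul_self_sqrt hs0.le
  rw [← h3]
  have hne1 : u * u - a^2 ≠ 0 := by nlinarith
  have hne2 : a + u ≠ 0 := by positivity
  have hne3 : (1:ℝ) - α ≠ 0 := h1α.ne'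
  have hne4 : u^2 - a^2 ≠ 0 := by nlinarith
  field_simp
  ring
end

section
/- Let Λ₀ > 0, γ > 0, α ∈ (0,1), β ∈ (0,1), and define λ(t) = Λ₀/(1-α) - (αΛ₀/(1-α))·E_β((α-1)γ t^β), where E_β is the one-parameter Mittag-Leffler function. Then the Laplace transform of λ equals λ̃(s) = (Λ₀/s)·(γ + s^β)/((1-α)γ + s^β) for s > ((1-α)γ)^{1/β}. -/
open MeasureTheory Real Set

lemma aux_integrable {s a : ℝ} (hs : 0 < s) (ha : 0 ≤ a) :
    IntegrableOn (fun t : ℝ ↦ Real.exp (-s * t) * t ^ a) (Set.Ioi 0) := by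
  have h := Real.GammaIntegral_convergent (s := a + 1) (by linarith)
  have h2 : IntegrableOn (fun x : ℝ => Real.exp (-(s * x)) * (s * x) ^ (a + 1 - 1))
      (Set.Ioi 0) :=
    (integrableOn_Ioi_comp_mul_left_iff (fun x : ℝ => Real.exp (-x) * x ^ (a + 1 - 1)) 0 hs).mpr
      (by rwa [mul_zero])
  have h3 : IntegrableOn (fun x : ℝ => ((s : ℝ) ^ a)⁻¹ *
      (Real.exp (-(s * x)) * (s * x) ^ (a + 1 - 1))) (Set.Ioi 0) := h2.const_mul _
  refine h3.congr_fun (fun x hx => ?_) measurableSet_Ioi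
  have hx0 : (0:ℝ) < x := hx
  have hsa : (s : ℝ) ^ a ≠ 0 := (Real.rpow_pos_of_pos hs a).ne'
  beta_reduce
  rw [add_sub_cancel_right, Real.mul_rpow hs.le hx0.le, neg_mul]
  field_simp

lemma aux_value {s a : ℝ} (hs : 0 < s) (ha : 0 ≤ a) :
    ∫ t in Set.Ioi (0:ℝ), Real.exp (-s * t) * t ^ a
      = Real.Gamma (a + 1) / s ^ (a + 1) := by
  have h := Real.integral_rpow_mul_exp_neg_mul_Ioi (a := a + 1) (r := s) (by linarith) hs
  rw [add_sub_cancel_right] at h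
  calc ∫ t in Set.Ioi (0:ℝ), Real.exp (-s * t) * t ^ a
      = ∫ t in Set.Ioi (0:ℝ), t ^ a * Real.exp (-(s * t)) := by
        refine setIntegral_congr_fun measurableSet_Ioi (fun t ht => ?_)
        rw [neg_mul]; ring
    _ = Real.Gamma (a + 1) / s ^ (a + 1) := by
        rw [h, one_div, Real.inv_rpow hs.le, inv_mul_eq_div]

lemma aux_gamma_ratio {x b : ℝ} (hb : 0 < b) (hx : 2 ≤ x) :
    Real.Gamma x * (x - 1) ^ b ≤ Real.Gamma (x + b) := by
  have hx1 : (0:ℝ) < x - 1 := by linarith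
  have hΓx : 0 < Real.Gamma x := Real.Gamma_pos_of_pos (by linarith)
  have hΓx1 : 0 < Real.Gamma (x - 1) := Real.Gamma_pos_of_pos hx1
  have hΓxb : 0 < Real.Gamma (x + b) := Real.Gamma_pos_of_pos (by linarith)
  have key := Real.convexOn_log_Gamma.slope_mono_adjacent
    (x := x - 1) (y := x) (z := x + b)
    (by simpa using hx1) (by simp; linarith) (by linarith) (by linarith)
  have hrec : Real.Gamma x = (x - 1) * Real.Gamma (x - 1) := by
    have := Real.Gamma_add_one hx1.ne'
    rwa [sub_add_cancel] at this
  have hlog : Real.log (Real.Gamma x) - Real.log (Real.Gamma (x - 1)) = Real.log (x - 1) := by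
    rw [hrec, Real.log_mul hx1.ne' hΓx1.ne']; ring
  simp only [Function.comp] at key
  rw [show x - (x - 1) = 1 by ring, show x + b - x = b by ring, div_one, hlog] at key
  have hineq : Real.log (Real.Gamma x) + b * Real.log (x - 1) ≤ Real.log (Real.Gamma (x + b)) := by
    rw [le_div_iff₀ hb] at key
    nlinarith
  calc Real.Gamma x * (x - 1) ^ b
      = Real.exp (Real.log (Real.Gamma x) + b * Real.log (x - 1)) := by
        rw [Real.exp_add, Real.exp_log hΓx, Real.rpow_def_of_pos hx1, mul_comm (Real.log (x-1)) b]
    _ ≤ Real.exp (Real.log (Real.Gamma (x + b))) := Real.exp_le_exp.mpr hineq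
    _ = Real.Gamma (x + b) := Real.exp_log hΓxb

lemma aux_summable {b : ℝ} (hb : 0 < b) (z : ℝ) :
    Summable (fun k : ℕ ↦ z ^ k / Real.Gamma (b * k + 1)) := by
  refine summable_of_ratio_norm_eventually_le (r := 1/2) (by norm_num) ?_
  obtain ⟨K, hK⟩ := exists_nat_ge ((max 1 ((2 * |z|) ^ (1/b))) / b)
  filter_upwards [Filter.eventually_ge_atTop K] with k hk
  have hKk : (K:ℝ) ≤ k := Nat.cast_le.mpr hk
  have hbk : max 1 ((2 * |z|) ^ (1/b)) ≤ b * k := by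
    rw [div_le_iff₀ hb] at hK
    calc max 1 ((2 * |z|) ^ (1/b)) ≤ K * b := hK
      _ ≤ k * b := by nlinarith
      _ = b * k := by ring
  have h1 : (1:ℝ) ≤ b * k := le_trans (le_max_left _ _) hbk
  have h2 : 2 * |z| ≤ (b * k) ^ b := by
    calc 2 * |z| = ((2 * |z|) ^ (1/b)) ^ b := by
          rw [← Real.rpow_mul (by positivity), one_div_mul_cancel hb.ne', Real.rpow_one]
      _ ≤ (b * k) ^ b := Real.rpow_le_rpow (Real.rpow_nonneg (by positivity) _)
          (le_trans (le_max_right _ _) hbk) hb.le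
  have hΓ1 : 0 < Real.Gamma (b * k + 1) := Real.Gamma_pos_of_pos (by positivity)
  have hΓ2 : 0 < Real.Gamma (b * k + 1 + b) := Real.Gamma_pos_of_pos (by positivity)
  have hg : Real.Gamma (b * k + 1) * (b * k) ^ b ≤ Real.Gamma (b * k + 1 + b) := by
    have := aux_gamma_ratio hb (x := b * k + 1) (by linarith)
    simpa using this
  have hcast : b * ((k:ℝ) + 1) + 1 = b * k + 1 + b := by ring
  have hc2 : b * ((k + 1 : ℕ) : ℝ) + 1 = b * k + 1 + b := by push_cast; ring
  rw [Real.norm_eq_abs, Real.norm_eq_abs, abs_div, abs_div, abs_pow, abs_pow, hc2,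
    abs_of_pos hΓ1, abs_of_pos hΓ2]
  rw [show (1:ℝ)/2 * (|z| ^ k / Real.Gamma (b * k + 1))
      = (|z| ^ k / 2) / Real.Gamma (b * k + 1) by ring]
  rw [div_le_div_iff₀ hΓ2 hΓ1]
  have hzk : (0:ℝ) ≤ |z| ^ k := pow_nonneg (abs_nonneg z) k
  have e1 := mul_le_mul_of_nonneg_left hg hzk
  have e2 := mul_le_mul_of_nonneg_left h2 (mul_nonneg hzk hΓ1.le)
  nlinarith [pow_succ |z| k]

noncomputable def mlOne (β z : ℝ) : ℝ := ∑' k : ℕ, z ^ k / Real.Gamma (β * k + 1)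

set_option maxHeartbeats 1000000 in
theorem laplace_expected_intensity (Λ₀ γ α β : ℝ) (hΛ : 0 < Λ₀) (hγ : 0 < γ)
    (hα : α ∈ Set.Ioo (0:ℝ) 1) (hβ : β ∈ Set.Ioo (0:ℝ) 1)
    (s : ℝ) (hs : ((1-α) * γ) ^ (1/β) < s) :
    ∫ t in Set.Ioi (0:ℝ), Real.exp (-s * t) *
        (Λ₀ / (1-α) - (α * Λ₀ / (1-α)) * mlOne β ((α-1) * γ * t ^ β))
      = (Λ₀ / s) * (γ + s ^ β) / ((1-α) * γ + s ^ β) := by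
  obtain ⟨hα0, hα1⟩ := hα
  obtain ⟨hβ0, hβ1⟩ := hβ
  have h1α : (0:ℝ) < 1 - α := by linarith
  set A : ℝ := Λ₀ / (1-α) with hA
  set B : ℝ := α * Λ₀ / (1-α) with hB
  have hBpos : 0 < B := by positivity
  have hApos : 0 < A := by positivity
  have hcpos : (0:ℝ) < (1-α) * γ := mul_pos h1α hγ
  have hspos : 0 < s := lt_of_le_of_lt (Real.rpow_nonneg hcpos.le _) hs
  have hsbpos : 0 < s ^ β := Real.rpow_pos_of_pos hspos β
  have hsb : (1-α) * γ < s ^ β := by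
    have h := Real.rpow_lt_rpow (Real.rpow_nonneg hcpos.le _) hs hβ0
    rwa [← Real.rpow_mul hcpos.le, one_div_mul_cancel hβ0.ne', Real.rpow_one] at h
  set x : ℝ := (α-1) * γ / s ^ β with hx
  have hxnorm : |x| < 1 := by
    rw [hx, abs_div, abs_of_pos hsbpos, abs_mul, abs_of_pos hγ,
      abs_of_neg (by linarith : α - 1 < 0), div_lt_one hsbpos]
    rw [show -(α-1) * γ = (1-α) * γ by ring]; exact hsb
  set d : ℕ → ℝ := fun k => (if k = 0 then A else 0) - B * ((α-1) * γ) ^ k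
      / Real.Gamma (β * k + 1) with hd
  set F : ℕ → ℝ → ℝ := fun k t => Real.exp (-s * t) * (d k * t ^ (β * (k:ℝ))) with hF
  have hΓpos : ∀ k : ℕ, 0 < Real.Gamma (β * k + 1) :=
    fun k => Real.Gamma_pos_of_pos (by positivity)
  have hexp : ∀ k : ℕ, (0:ℝ) ≤ β * (k:ℝ) := fun k => by positivity
  -- integrability of each term
  have hFint : ∀ k, IntegrableOn (F k) (Set.Ioi 0) := by
    intro k
    have h1 : IntegrableOn (fun t : ℝ => d k * (Real.exp (-s * t) * t ^ (β * (k:ℝ))))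
        (Set.Ioi 0) := (aux_integrable hspos (hexp k)).const_mul _
    exact h1.congr_fun (fun t _ => by rw [hF]; ring) measurableSet_Ioi
  -- value of each integral
  have hFval : ∀ k, ∫ t in Set.Ioi (0:ℝ), F k t
      = d k * (Real.Gamma (β * (k:ℝ) + 1) / s ^ (β * (k:ℝ) + 1)) := by
    intro k
    calc ∫ t in Set.Ioi (0:ℝ), F k t
        = ∫ t in Set.Ioi (0:ℝ), d k * (Real.exp (-s * t) * t ^ (β * (k:ℝ))) := by
          refine setIntegral_congr_fun measurableSet_Ioi (fun t _ => ?_); rw [hF]; ring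
      _ = d k * ∫ t in Set.Ioi (0:ℝ), Real.exp (-s * t) * t ^ (β * (k:ℝ)) :=
          integral_const_mul _ _
      _ = d k * (Real.Gamma (β * (k:ℝ) + 1) / s ^ (β * (k:ℝ) + 1)) := by
          rw [aux_value hspos (hexp k)]
  -- value of each norm integral
  have hFnorm : ∀ k, ∫ t in Set.Ioi (0:ℝ), ‖F k t‖
      = |d k| * (Real.Gamma (β * (k:ℝ) + 1) / s ^ (β * (k:ℝ) + 1)) := by
    intro k
    calc ∫ t in Set.Ioi (0:ℝ), ‖F k t‖
        = ∫ t in Set.Ioi (0:ℝ), |d k| * (Real.exp (-s * t) * t ^ (β * (k:ℝ))) := by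
          refine setIntegral_congr_fun measurableSet_Ioi (fun t ht => ?_)
          have ht0 : (0:ℝ) < t := ht
          rw [hF, Real.norm_eq_abs, abs_mul, abs_of_pos (Real.exp_pos _), abs_mul,
            abs_of_nonneg (Real.rpow_nonneg ht0.le _)]
          ring
      _ = |d k| * ∫ t in Set.Ioi (0:ℝ), Real.exp (-s * t) * t ^ (β * (k:ℝ)) :=
          integral_const_mul _ _
      _ = _ := by rw [aux_value hspos (hexp k)]
  -- summability of the norm integrals
  have hpow : ∀ k : ℕ, s ^ (β * (k:ℝ) + 1) = (s ^ β) ^ k * s := by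
    intro k
    rw [Real.rpow_add hspos, Real.rpow_one, Real.rpow_mul hspos.le,
      Real.rpow_natCast]
  have hsum : Summable (fun k => ∫ t in Set.Ioi (0:ℝ), ‖F k t‖) := by
    refine Summable.of_nonneg_of_le
      (fun k => integral_nonneg (fun t => norm_nonneg _))
      (f := fun k => (if k = 0 then A / s else 0)
        + (B / s) * (((1-α) * γ) / s ^ β) ^ k) (fun k => ?_) ?_
    · rw [hFnorm k]
      have hdk : |d k| ≤ (if k = 0 then A else 0)
          + B * ((1-α) * γ) ^ k / Real.Gamma (β * k + 1) := by
        rw [hd]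
        refine le_trans (abs_sub _ _) ?_
        have e1 : |if k = 0 then A else 0| = (if k = 0 then A else 0) := by
          split <;> simp [abs_of_pos hApos]
        have e2 : |B * ((α-1) * γ) ^ k / Real.Gamma (β * k + 1)|
            = B * ((1-α) * γ) ^ k / Real.Gamma (β * k + 1) := by
          rw [abs_div, abs_of_pos (hΓpos k), abs_mul, abs_of_pos hBpos, abs_pow,
            abs_mul, abs_of_neg (by linarith : α - 1 < 0), abs_of_pos hγ]
          ring_nf
        rw [e1, e2]
      have hq : (0:ℝ) ≤ Real.Gamma (β * (k:ℝ) + 1) / s ^ (β * (k:ℝ) + 1) :=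
        div_nonneg (hΓpos k).le (Real.rpow_nonneg hspos.le _)
      calc |d k| * (Real.Gamma (β * (k:ℝ) + 1) / s ^ (β * (k:ℝ) + 1))
          ≤ ((if k = 0 then A else 0) + B * ((1-α) * γ) ^ k / Real.Gamma (β * k + 1))
            * (Real.Gamma (β * (k:ℝ) + 1) / s ^ (β * (k:ℝ) + 1)) :=
            mul_le_mul_of_nonneg_right hdk hq
        _ = (if k = 0 then A / s else 0) + (B / s) * (((1-α) * γ) / s ^ β) ^ k := by
            rw [hpow k]
            split
            · rename_i h0; subst h0
              simp only [Nat.cast_zero, mul_zero, zero_add, pow_zero, Real.Gamma_one]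
              field_simp
            · rw [zero_add, div_pow]
              field_simp
              ring
    · refine Summable.add ?_ ?_
      · exact summable_of_finite_support (by
          apply Set.Finite.subset (Set.finite_singleton 0)
          intro k hk
          simp only [Function.mem_support, ne_eq] at hk
          by_contra h
          simp only [Set.mem_singleton_iff] at h
          rw [if_neg h] at hk
          exact hk rfl)
      · refine Summable.mul_left _ (summable_geometric_of_lt_one (by positivity) ?_)
        rw [div_lt_one hsbpos]; exact hsb
  -- the integrand is the tsum of F
  have hcongr : ∀ t ∈ Set.Ioi (0:ℝ), Real.exp (-s * t) *
      (Λ₀ / (1-α) - (α * Λ₀ / (1-α)) * mlOne β ((α-1) * γ * t ^ β))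
      = ∑' k, F k t := by
    intro t ht
    have ht0 : (0:ℝ) < t := ht
    set z : ℝ := (α-1) * γ * t ^ β with hz
    have hsz : Summable (fun k : ℕ => z ^ k / Real.Gamma (β * k + 1)) :=
      aux_summable hβ0 z
    have hml : mlOne β z = ∑' k : ℕ, z ^ k / Real.Gamma (β * k + 1) := rfl
    have hzk : ∀ k : ℕ, z ^ k = ((α-1) * γ) ^ k * t ^ (β * (k:ℝ)) := by
      intro k
      rw [hz, mul_pow, Real.rpow_mul ht0.le, Real.rpow_natCast]
    have hstep : A - B * mlOne β z
        = ∑' k : ℕ, ((if k = 0 then A else 0) - B * (z ^ k / Real.Gamma (β * k + 1))) := by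
      rw [Summable.tsum_sub ((hasSum_ite_eq 0 A).summable) (hsz.mul_left B)]
      rw [tsum_mul_left, hml, tsum_ite_eq]
    rw [← hA, ← hB, hstep, ← tsum_mul_left]
    refine tsum_congr (fun k => ?_)
    rw [hF, hd]
    rcases Nat.eq_zero_or_pos k with h0 | hpos
    · subst h0
      simp [Real.rpow_zero]
    · have hk0 : k ≠ 0 := hpos.ne'
      simp only [if_neg hk0]
      rw [hzk k]
      ring
  -- put everything together
  calc ∫ t in Set.Ioi (0:ℝ), Real.exp (-s * t) *
        (Λ₀ / (1-α) - (α * Λ₀ / (1-α)) * mlOne β ((α-1) * γ * t ^ β))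
      = ∫ t in Set.Ioi (0:ℝ), ∑' k, F k t :=
        setIntegral_congr_fun measurableSet_Ioi hcongr
    _ = ∑' k, ∫ t in Set.Ioi (0:ℝ), F k t :=
        (integral_tsum_of_summable_integral_norm hFint hsum).symm
    _ = ∑' k : ℕ, ((if k = 0 then A / s else 0) - (B / s) * x ^ k) := by
        refine tsum_congr (fun k => ?_)
        rw [hFval k, hd, hpow k, hx]
        rcases Nat.eq_zero_or_pos k with h0 | hpos
        · subst h0
          simp only [Nat.cast_zero, mul_zero, zero_add, pow_zero, Real.Gamma_one,
            if_pos rfl, ↓reduceIte]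
          field_simp
        · have hk0 : k ≠ 0 := hpos.ne'
          simp only [if_neg hk0]
          rw [div_pow]
          have := (hΓpos k).ne'
          field_simp
          ring
    _ = A / s - (B / s) * (1 - x)⁻¹ := by
        rw [Summable.tsum_sub ((hasSum_ite_eq 0 (A / s)).summable)
          ((summable_geometric_of_norm_lt_one (x := x) (by rwa [Real.norm_eq_abs])).mul_left _)]
        rw [tsum_ite_eq, tsum_mul_left,
          tsum_geometric_of_norm_lt_one (ξ := x) (by rwa [Real.norm_eq_abs])]
    _ = (Λ₀ / s) * (γ + s ^ β) / ((1-α) * γ + s ^ β) := by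
        have h1x : 1 - x = ((1-α) * γ + s ^ β) / s ^ β := by
          rw [hx]; field_simp; ring
        have hden : (0:ℝ) < (1-α) * γ + s ^ β := by positivity
        rw [h1x, hA, hB]
        field_simp
        ring
end
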